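/- Suppose conditions (1.2) and (1.6) hold. Then for all x ∈ ℝ: 2⁻¹h(x) ≤ ρ(x) ≤ 2h(x), where ρ(x) = u(x)v(x). -/

import Mathlib

open MeasureTheory Set Filter
open scoped ENNReal

noncomputable section

/-- Conditions (1.2): `r > 0`, `q ≥ 0`, `1/r ∈ L¹loc(ℝ)`, `q ∈ L¹loc(ℝ)`. -/
def Cond12 (r q : ℝ → ℝ) : Prop :=
  (∀ x : ℝ, 0 < r x) ∧ (∀ x : ℝ, 0 ≤ q x) ∧
    LocallyIntegrable (fun x : ℝ => (r x)⁻¹) volume ∧ LocallyIntegrable q volume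

/-- Condition (1.4): `∫_{-∞}^0 dt/r(t) = ∫_0^∞ dt/r(t) = ∞`. -/
def Cond14 (r : ℝ → ℝ) : Prop :=
  (∫⁻ t in Iic (0 : ℝ), ENNReal.ofReal (r t)⁻¹) = ⊤ ∧
  (∫⁻ t in Ici (0 : ℝ), ENNReal.ofReal (r t)⁻¹) = ⊤

/-- Condition (1.5): `∫_{-∞}^x q > 0` and `∫_x^∞ q > 0` for all `x`. -/
def Cond15 (q : ℝ → ℝ) : Prop :=
  ∀ x : ℝ, (0 < ∫⁻ t in Iic x, ENNReal.ofReal (q t)) ∧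
           (0 < ∫⁻ t in Ici x, ENNReal.ofReal (q t))

/-- Condition (1.6): `(∫_{x-d}^x 1/r)·(∫_{x-d}^x q) → ∞` as `|d| → ∞` (for `d < 0` the
integrals are taken over `[x, x-d]`; the set `uIoc (x-d) x` covers both orientations). -/
def Cond16 (r q : ℝ → ℝ) : Prop :=
  ∀ x : ℝ, Tendsto (fun d : ℝ =>
      (∫ t in uIoc (x - d) x, (r t)⁻¹) * ∫ t in uIoc (x - d) x, q t)
    (atTop ⊔ atBot) atTop

/-- `y` is a solution of `-(r y')' + q y = f` with (a.e.) derivative `y'`: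
`y` and `r·y'` are (locally) absolutely continuous, expressed via the integral
characterization, and the equation holds. -/
def IsSolutionWith (r q f y y' : ℝ → ℝ) : Prop :=
  (∀ a b : ℝ, IntervalIntegrable y' volume a b) ∧
  (∀ x : ℝ, y x = y 0 + ∫ t in (0:ℝ)..x, y' t) ∧
  (∀ a b : ℝ, IntervalIntegrable (fun t => q t * y t - f t) volume a b) ∧
  (∀ x : ℝ, r x * y' x = r 0 * y' 0 + ∫ t in (0:ℝ)..x, (q t * y t - f t))

/-- `y` is a solution of `-(r y')' + q y = f`. -/
def IsSolution (r q f y : ℝ → ℝ) : Prop := ∃ y' : ℝ → ℝ, IsSolutionWith r q f y y'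

/-- `z` is a solution of the homogeneous equation `(r z')' = q z` with derivative `z'`. -/
def IsSolutionHom (r q z z' : ℝ → ℝ) : Prop := IsSolutionWith r q (fun _ => 0) z z'

/-- Membership in `L_p(ℝ)`. -/
def MemLP (f : ℝ → ℝ) (p : ℝ) : Prop := MemLp f (ENNReal.ofReal p) volume

/-- The `L_p(ℝ)` norm. -/
def lpNorm (f : ℝ → ℝ) (p : ℝ) : ℝ≥0∞ := eLpNorm f (ENNReal.ofReal p) volume

/-- The equation `-(r y')' + q y = f` is correctly solvable in `L_p(ℝ)`: for every
`f ∈ L_p` there is a unique solution `y ∈ L_p`, and `‖y‖_p ≤ c(p)‖f‖_p` with an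
absolute constant `c(p) > 0`. -/
def CorrectlySolvable (r q : ℝ → ℝ) (p : ℝ) : Prop :=
  (∀ f : ℝ → ℝ, MemLP f p → ∃! y : ℝ → ℝ, IsSolution r q f y ∧ MemLP y p) ∧
  ∃ c : ℝ, 0 < c ∧ ∀ f y : ℝ → ℝ, MemLP f p → IsSolution r q f y → MemLP y p →
    lpNorm y p ≤ ENNReal.ofReal c * lpNorm f p

/-- `{u, v}` (with derivatives `u'`, `v'`) is the fundamental system of solutions of
`(r z')' = q z` with properties (1.8)-(1.11). -/
def IsFSS (r q u u' v v' : ℝ → ℝ) : Prop :=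
  IsSolutionHom r q u u' ∧ IsSolutionHom r q v v' ∧
  (∀ x : ℝ, 0 < u x) ∧ (∀ x : ℝ, 0 < v x) ∧
  (∀ x : ℝ, 0 ≤ v' x) ∧ (∀ x : ℝ, u' x ≤ 0) ∧
  (∀ x : ℝ, r x * (v' x * u x - u' x * v x) = 1) ∧
  Tendsto (fun x => v x / u x) atBot (nhds 0) ∧
  Tendsto (fun x => u x / v x) atTop (nhds 0) ∧
  (∫⁻ t in Iic (0 : ℝ), ENNReal.ofReal (r t * (v t) ^ 2)⁻¹) = ⊤ ∧
  (∫⁻ t in Ici (0 : ℝ), ENNReal.ofReal (r t * (u t) ^ 2)⁻¹) = ⊤ ∧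
  (∫⁻ t in Ici (0 : ℝ), ENNReal.ofReal (r t * (v t) ^ 2)⁻¹) < ⊤ ∧
  (∫⁻ t in Iic (0 : ℝ), ENNReal.ofReal (r t * (u t) ^ 2)⁻¹) < ⊤

/-- The Green function `G(x,t)` of (1.12). -/
def greenK (u v : ℝ → ℝ) (x t : ℝ) : ℝ := if t ≤ x then u x * v t else u t * v x

/-- `(G₁ f)(x) = u(x) ∫_{-∞}^x v f`. -/
def G1op (u v f : ℝ → ℝ) (x : ℝ) : ℝ := u x * ∫ t in Iic x, v t * f t

/-- `(G₂ f)(x) = v(x) ∫_x^∞ u f`. -/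
def G2op (u v f : ℝ → ℝ) (x : ℝ) : ℝ := v x * ∫ t in Ici x, u t * f t

/-- The Green integral operator `(G f)(x) = ∫_ℝ G(x,t) f(t) dt`. -/
def greenOp (u v f : ℝ → ℝ) (x : ℝ) : ℝ := G1op u v f x + G2op u v f x

/-- The operator norm of a map `T` acting on `L_p(ℝ)`: the least constant `C` such
that `‖T f‖_p ≤ C ‖f‖_p` for all `f ∈ L_p`. -/
def opNormLp (T : (ℝ → ℝ) → ℝ → ℝ) (p : ℝ) : ℝ≥0∞ :=
  sInf {C : ℝ≥0∞ | ∀ f : ℝ → ℝ, MemLP f p → lpNorm (T f) p ≤ C * lpNorm f p}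

/-- The Green operator is bounded as an operator from `L_p(ℝ)` to `L_p(ℝ)`:
it is well defined on `L_p` (the defining integrals converge), maps into `L_p`,
and its operator norm is finite. -/
def GreenBounded (u v : ℝ → ℝ) (p : ℝ) : Prop :=
  (∀ f : ℝ → ℝ, MemLP f p →
    (∀ x : ℝ, IntegrableOn (fun t => v t * f t) (Iic x) volume ∧
              IntegrableOn (fun t => u t * f t) (Ici x) volume) ∧
    MemLP (greenOp u v f) p) ∧
  opNormLp (greenOp u v) p < ⊤

/-- `F₁(x,d) = (∫_{x-d}^x dt/r)·(∫_{x-d}^x q dt)`. -/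
def F1 (r q : ℝ → ℝ) (x d : ℝ) : ℝ :=
  (∫ t in (x - d)..x, (r t)⁻¹) * ∫ t in (x - d)..x, q t

/-- `F₂(x,d) = (∫_x^{x+d} dt/r)·(∫_x^{x+d} q dt)`. -/
def F2 (r q : ℝ → ℝ) (x d : ℝ) : ℝ :=
  (∫ t in x..(x + d), (r t)⁻¹) * ∫ t in x..(x + d), q t

/-- `φ(x) = ∫_{x-d₁(x)}^x dt/r(t)`. -/
def phiF (r d1 : ℝ → ℝ) (x : ℝ) : ℝ := ∫ t in (x - d1 x)..x, (r t)⁻¹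

/-- `ψ(x) = ∫_x^{x+d₂(x)} dt/r(t)`. -/
def psiF (r d2 : ℝ → ℝ) (x : ℝ) : ℝ := ∫ t in x..(x + d2 x), (r t)⁻¹

/-- `h(x) = φ(x)ψ(x)/(φ(x)+ψ(x))`. -/
def hF (r d1 d2 : ℝ → ℝ) (x : ℝ) : ℝ :=
  phiF r d1 x * psiF r d2 x / (phiF r d1 x + psiF r d2 x)

/-- `d₁` solves the first equation of (1.15). -/
def IsD1 (r q d1 : ℝ → ℝ) : Prop := ∀ x : ℝ, 0 < d1 x ∧ F1 r q x (d1 x) = 1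

/-- `d₂` solves the second equation of (1.15). -/
def IsD2 (r q d2 : ℝ → ℝ) : Prop := ∀ x : ℝ, 0 < d2 x ∧ F2 r q x (d2 x) = 1

/-- `d` solves equation (1.18): `∫_{x-d(x)}^{x+d(x)} dt/(r(t)h(t)) = 1`. -/
def IsD (r h d : ℝ → ℝ) : Prop :=
  ∀ x : ℝ, 0 < d x ∧ (∫ t in (x - d x)..(x + d x), (r t * h t)⁻¹) = 1

/-- The Hardy-type operator `(𝒦 f)(t) = μ(t) ∫_t^∞ θ(ξ) f(ξ) dξ`. -/
def hardyOp (μ θ f : ℝ → ℝ) (t : ℝ) : ℝ := μ t * ∫ ξ in Ici t, θ ξ * f ξ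

/-- `H_p = sup_x (∫_{-∞}^x μ^p)^{1/p} (∫_x^∞ θ^{p'})^{1/p'}` with `p' = p/(p-1)`. -/
def HardyHp (μ θ : ℝ → ℝ) (p : ℝ) : ℝ≥0∞ :=
  ⨆ x : ℝ, (∫⁻ t in Iic x, ENNReal.ofReal (μ t ^ p)) ^ (1 / p) *
           (∫⁻ t in Ici x, ENNReal.ofReal (θ t ^ (p / (p - 1)))) ^ (1 - 1 / p)

private lemma locInt_intervalInt {g : ℝ → ℝ} (h : LocallyIntegrable g volume) (a b : ℝ) :
    IntervalIntegrable g volume a b :=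
  (h.integrableOn_isCompact isCompact_uIcc).intervalIntegrable

private lemma sol_diff {r q f y y' : ℝ → ℝ} (h : IsSolutionWith r q f y y') (a b : ℝ) :
    y b - y a = ∫ t in a..b, y' t := by
  obtain ⟨hi, hrep, -, -⟩ := h
  have h2 := intervalIntegral.integral_add_adjacent_intervals (hi 0 a) (hi a b)
  rw [hrep a, hrep b]
  linarith

private lemma hom_W_diff {r q y y' : ℝ → ℝ} (h : IsSolutionHom r q y y') (a b : ℝ) :
    r b * y' b - r a * y' a = ∫ t in a..b, q t * y t := by
  obtain ⟨-, -, hi, hrep⟩ := h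
  have h2 := intervalIntegral.integral_add_adjacent_intervals (hi 0 a) (hi a b)
  have h3 : r b * y' b - r a * y' a = ∫ t in a..b, (q t * y t - 0) := by
    rw [hrep a, hrep b]; simp only; linarith
  simpa using h3

private lemma hom_qy_int {r q y y' : ℝ → ℝ} (h : IsSolutionHom r q y y') (a b : ℝ) :
    IntervalIntegrable (fun t => q t * y t) volume a b := by
  have := h.2.2.1 a b
  simpa using this

private lemma v_side {r q v v' : ℝ → ℝ}
    (hr : ∀ x, 0 < r x) (hq : ∀ x, 0 ≤ q x)
    (hrint : ∀ a b : ℝ, IntervalIntegrable (fun t => (r t)⁻¹) volume a b)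
    (hqint : ∀ a b : ℝ, IntervalIntegrable q volume a b)
    (hsol : IsSolutionHom r q v v')
    (hv : ∀ x, 0 < v x) (hv' : ∀ x, 0 ≤ v' x)
    (x δ : ℝ) (hδ : 0 < δ)
    (h1 : (∫ t in (x-δ)..x, (r t)⁻¹) * (∫ t in (x-δ)..x, q t) = 1) :
    v x ≤ 2 * (∫ t in (x-δ)..x, (r t)⁻¹) * (r x * v' x) ∧
      (r x * v' x) * (∫ t in (x-δ)..x, (r t)⁻¹) ≤ 2 * v x ∧
      0 < (∫ t in (x-δ)..x, (r t)⁻¹) := by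
  set y := x - δ with hy
  have hyx : y ≤ x := by rw [hy]; linarith
  set R := ∫ t in y..x, (r t)⁻¹ with hR
  set Q := ∫ t in y..x, q t with hQ
  have hR0 : 0 ≤ R := intervalIntegral.integral_nonneg hyx (fun t _ => inv_nonneg.mpr (hr t).le)
  have hQ0 : 0 ≤ Q := intervalIntegral.integral_nonneg hyx (fun t _ => hq t)
  have hRne : R ≠ 0 := by intro h; rw [h, zero_mul] at h1; norm_num at h1
  have hRpos : 0 < R := hR0.lt_of_ne (Ne.symm hRne)
  have hQpos : 0 < Q := by
    rcases hQ0.lt_or_eq with h | h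
    · exact h
    · rw [← h, mul_zero] at h1; norm_num at h1
  have hWd := hom_W_diff hsol
  have hvd := sol_diff hsol
  have hqv := hom_qy_int hsol
  have hWmono : ∀ a b : ℝ, a ≤ b → r a * v' a ≤ r b * v' b := by
    intro a b hab
    have h2 := hWd a b
    have h3 : (0:ℝ) ≤ ∫ t in a..b, q t * v t :=
      intervalIntegral.integral_nonneg hab (fun t _ => mul_nonneg (hq t) (hv t).le)
    linarith
  have hvmono : ∀ a b : ℝ, a ≤ b → v a ≤ v b := by
    intro a b hab
    have h2 := hvd a b
    have h3 : (0:ℝ) ≤ ∫ t in a..b, v' t :=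
      intervalIntegral.integral_nonneg hab (fun t _ => hv' t)
    linarith
  have hWy0 : 0 ≤ r y * v' y := mul_nonneg (hr y).le (hv' y)
  -- step1 : v y * Q ≤ r x * v' x
  have step1 : v y * Q ≤ r x * v' x := by
    have hle : (∫ t in y..x, q t * v y) ≤ ∫ t in y..x, q t * v t := by
      apply intervalIntegral.integral_mono_on hyx ((hqint y x).mul_const _) (hqv y x)
      intro t ht
      exact mul_le_mul_of_nonneg_left (hvmono y t ht.1) (hq t)
    rw [intervalIntegral.integral_mul_const] at hle
    have h2 := hWd y x
    have hcomm : Q * v y = v y * Q := mul_comm _ _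
    linarith
  -- step2 : v x ≤ v y + (r x * v' x) * R
  have step2 : v x ≤ v y + (r x * v' x) * R := by
    have hle : (∫ t in y..x, v' t) ≤ ∫ t in y..x, (r x * v' x) * (r t)⁻¹ := by
      apply intervalIntegral.integral_mono_on hyx (hsol.1 y x) ((hrint y x).const_mul _)
      intro t ht
      have h4 : r t * v' t ≤ r x * v' x := hWmono t x ht.2
      have h5 : 0 < r t := hr t
      rw [show (r x * v' x) * (r t)⁻¹ = (r x * v' x) / r t by ring, le_div_iff₀ h5]
      nlinarith
    rw [intervalIntegral.integral_const_mul] at hle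
    have h2 := hvd y x
    linarith
  -- step3 : (r y * v' y) * R ≤ v x - v y
  have step3 : (r y * v' y) * R ≤ v x - v y := by
    have hle : (∫ t in y..x, (r y * v' y) * (r t)⁻¹) ≤ ∫ t in y..x, v' t := by
      apply intervalIntegral.integral_mono_on hyx ((hrint y x).const_mul _) (hsol.1 y x)
      intro t ht
      have h4 : r y * v' y ≤ r t * v' t := hWmono y t ht.1
      have h5 : 0 < r t := hr t
      rw [show (r y * v' y) * (r t)⁻¹ = (r y * v' y) / r t by ring, div_le_iff₀ h5]
      nlinarith
    rw [intervalIntegral.integral_const_mul] at hle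
    have h2 := hvd y x
    linarith
  -- step4 : r x * v' x ≤ r y * v' y + v x * Q
  have step4 : r x * v' x ≤ r y * v' y + v x * Q := by
    have hle : (∫ t in y..x, q t * v t) ≤ ∫ t in y..x, q t * v x := by
      apply intervalIntegral.integral_mono_on hyx (hqv y x) ((hqint y x).mul_const _)
      intro t ht
      exact mul_le_mul_of_nonneg_left (hvmono t x ht.2) (hq t)
    rw [intervalIntegral.integral_mul_const] at hle
    have h2 := hWd y x
    have hcomm : Q * v x = v x * Q := mul_comm _ _
    linarith
  refine ⟨?_, ?_, hRpos⟩
  · -- v x ≤ 2 R W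
    have h6 : v y * Q * R ≤ (r x * v' x) * R := mul_le_mul_of_nonneg_right step1 hR0
    have h7 : v y * Q * R = v y := by linear_combination (v y) * h1
    nlinarith [step2, h6, h7]
  · -- W * R ≤ 2 v x
    have h9 : (r x * v' x) * R ≤ (r y * v' y) * R + v x := by
      have h10 := mul_le_mul_of_nonneg_right step4 hR0
      have h11 : (r y * v' y + v x * Q) * R = (r y * v' y) * R + v x := by
        linear_combination (v x) * h1
      linarith
    nlinarith [step3, (hv y).le, h9]

private lemma u_side {r q u u' : ℝ → ℝ}
    (hr : ∀ x, 0 < r x) (hq : ∀ x, 0 ≤ q x)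
    (hrint : ∀ a b : ℝ, IntervalIntegrable (fun t => (r t)⁻¹) volume a b)
    (hqint : ∀ a b : ℝ, IntervalIntegrable q volume a b)
    (hsol : IsSolutionHom r q u u')
    (hu : ∀ x, 0 < u x) (hu' : ∀ x, u' x ≤ 0)
    (x η : ℝ) (hη : 0 < η)
    (h1 : (∫ t in x..(x+η), (r t)⁻¹) * (∫ t in x..(x+η), q t) = 1) :
    u x ≤ 2 * (∫ t in x..(x+η), (r t)⁻¹) * (-(r x * u' x)) ∧
      (-(r x * u' x)) * (∫ t in x..(x+η), (r t)⁻¹) ≤ 2 * u x ∧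
      0 < (∫ t in x..(x+η), (r t)⁻¹) := by
  set z := x + η with hz
  have hxz : x ≤ z := by rw [hz]; linarith
  set R := ∫ t in x..z, (r t)⁻¹ with hR
  set Q := ∫ t in x..z, q t with hQ
  have hR0 : 0 ≤ R := intervalIntegral.integral_nonneg hxz (fun t _ => inv_nonneg.mpr (hr t).le)
  have hQ0 : 0 ≤ Q := intervalIntegral.integral_nonneg hxz (fun t _ => hq t)
  have hRne : R ≠ 0 := by intro h; rw [h, zero_mul] at h1; norm_num at h1
  have hRpos : 0 < R := hR0.lt_of_ne (Ne.symm hRne)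
  have hQpos : 0 < Q := by
    rcases hQ0.lt_or_eq with h | h
    · exact h
    · rw [← h, mul_zero] at h1; norm_num at h1
  have hWd := hom_W_diff hsol
  have hud := sol_diff hsol
  have hqu := hom_qy_int hsol
  have hWmono : ∀ a b : ℝ, a ≤ b → r a * u' a ≤ r b * u' b := by
    intro a b hab
    have h2 := hWd a b
    have h3 : (0:ℝ) ≤ ∫ t in a..b, q t * u t :=
      intervalIntegral.integral_nonneg hab (fun t _ => mul_nonneg (hq t) (hu t).le)
    linarith
  have humono : ∀ a b : ℝ, a ≤ b → u b ≤ u a := by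
    intro a b hab
    have h2 := hud a b
    have h3 : (∫ t in a..b, u' t) ≤ ∫ t in a..b, (0:ℝ) :=
      intervalIntegral.integral_mono_on hab (hsol.1 a b) intervalIntegrable_const
        (fun t _ => hu' t)
    simp at h3
    linarith
  have hNz0 : 0 ≤ -(r z * u' z) := by nlinarith [mul_nonpos_of_nonneg_of_nonpos (hr z).le (hu' z)]
  -- step1 : u z * Q ≤ -(r x * u' x)
  have step1 : u z * Q ≤ -(r x * u' x) := by
    have hle : (∫ t in x..z, q t * u z) ≤ ∫ t in x..z, q t * u t := by
      apply intervalIntegral.integral_mono_on hxz ((hqint x z).mul_const _) (hqu x z)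
      intro t ht
      exact mul_le_mul_of_nonneg_left (humono t z ht.2) (hq t)
    rw [intervalIntegral.integral_mul_const] at hle
    have h2 := hWd x z
    have hcomm : Q * u z = u z * Q := mul_comm _ _
    linarith
  -- step2 : u x ≤ u z + (-(r x * u' x)) * R
  have step2 : u x ≤ u z + (-(r x * u' x)) * R := by
    have hle : (∫ t in x..z, (r x * u' x) * (r t)⁻¹) ≤ ∫ t in x..z, u' t := by
      apply intervalIntegral.integral_mono_on hxz ((hrint x z).const_mul _) (hsol.1 x z)
      intro t ht
      have h4 : r x * u' x ≤ r t * u' t := hWmono x t ht.1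
      have h5 : 0 < r t := hr t
      rw [show (r x * u' x) * (r t)⁻¹ = (r x * u' x) / r t by ring, div_le_iff₀ h5]
      nlinarith
    rw [intervalIntegral.integral_const_mul] at hle
    have h2 := hud x z
    nlinarith
  -- step3 : (-(r z * u' z)) * R ≤ u x - u z
  have step3 : (-(r z * u' z)) * R ≤ u x - u z := by
    have hle : (∫ t in x..z, u' t) ≤ ∫ t in x..z, (r z * u' z) * (r t)⁻¹ := by
      apply intervalIntegral.integral_mono_on hxz (hsol.1 x z) ((hrint x z).const_mul _)
      intro t ht
      have h4 : r t * u' t ≤ r z * u' z := hWmono t z ht.2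
      have h5 : 0 < r t := hr t
      rw [show (r z * u' z) * (r t)⁻¹ = (r z * u' z) / r t by ring, le_div_iff₀ h5]
      nlinarith
    rw [intervalIntegral.integral_const_mul] at hle
    have h2 := hud x z
    nlinarith
  -- step4 : -(r x * u' x) ≤ -(r z * u' z) + u x * Q
  have step4 : -(r x * u' x) ≤ -(r z * u' z) + u x * Q := by
    have hle : (∫ t in x..z, q t * u t) ≤ ∫ t in x..z, q t * u x := by
      apply intervalIntegral.integral_mono_on hxz (hqu x z) ((hqint x z).mul_const _)
      intro t ht
      exact mul_le_mul_of_nonneg_left (humono x t ht.1) (hq t)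
    rw [intervalIntegral.integral_mul_const] at hle
    have h2 := hWd x z
    have hcomm : Q * u x = u x * Q := mul_comm _ _
    linarith
  refine ⟨?_, ?_, hRpos⟩
  · have h6 : u z * Q * R ≤ (-(r x * u' x)) * R := mul_le_mul_of_nonneg_right step1 hR0
    have h7 : u z * Q * R = u z := by linear_combination (u z) * h1
    nlinarith [step2, h6, h7]
  · have h9 : (-(r x * u' x)) * R ≤ (-(r z * u' z)) * R + u x := by
      have h10 := mul_le_mul_of_nonneg_right step4 hR0
      have h11 : (-(r z * u' z) + u x * Q) * R = (-(r z * u' z)) * R + u x := by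
        linear_combination (u x) * h1
      linarith
    nlinarith [step3, (hu z).le, h9]

/-- Lemma 2.5: under (1.2) and (1.6), for all `x ∈ ℝ`:
`2⁻¹ h(x) ≤ ρ(x) ≤ 2 h(x)` where `ρ = u·v`. -/
theorem stmt_11 (r q u u' v v' d1 d2 : ℝ → ℝ) (h12 : Cond12 r q) (h16 : Cond16 r q)
    (hFSS : IsFSS r q u u' v v') (hd1 : IsD1 r q d1) (hd2 : IsD2 r q d2) :
    ∀ x : ℝ, 2⁻¹ * hF r d1 d2 x ≤ u x * v x ∧ u x * v x ≤ 2 * hF r d1 d2 x := by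
  obtain ⟨hr, hq, hrl, hql⟩ := h12
  obtain ⟨hsolu, hsolv, hu, hv, hv', hu', hw, -⟩ := hFSS
  have hrint : ∀ a b : ℝ, IntervalIntegrable (fun t => (r t)⁻¹) volume a b :=
    fun a b => locInt_intervalInt hrl a b
  have hqint : ∀ a b : ℝ, IntervalIntegrable q volume a b :=
    fun a b => locInt_intervalInt hql a b
  intro x
  obtain ⟨hd1pos, hd1eq⟩ := hd1 x
  obtain ⟨hd2pos, hd2eq⟩ := hd2 x
  have hd1eq' : (∫ t in (x - d1 x)..x, (r t)⁻¹) * (∫ t in (x - d1 x)..x, q t) = 1 := hd1eq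
  have hd2eq' : (∫ t in x..(x + d2 x), (r t)⁻¹) * (∫ t in x..(x + d2 x), q t) = 1 := hd2eq
  obtain ⟨hv1, hv2, hP⟩ := v_side hr hq hrint hqint hsolv hv hv' x (d1 x) hd1pos hd1eq'
  obtain ⟨hu1, hu2, hS⟩ := u_side hr hq hrint hqint hsolu hu hu' x (d2 x) hd2pos hd2eq'
  set P := ∫ t in (x - d1 x)..x, (r t)⁻¹ with hPdef
  set S := ∫ t in x..(x + d2 x), (r t)⁻¹ with hSdef
  set W := r x * v' x with hWdef
  set N := -(r x * u' x) with hNdef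
  have hWron : W * u x + N * v x = 1 := by
    have := hw x
    rw [hWdef, hNdef]
    linear_combination this
  have hsum : 0 < P + S := by linarith
  have hhF : hF r d1 d2 x = P * S / (P + S) := by
    rw [hF, phiF, psiF]
  have e : P * S * (W * u x + N * v x) = P * S := by rw [hWron, mul_one]
  constructor
  · -- lower bound
    have k1 : P * S ≤ 2 * (u x * v x) * (P + S) := by
      have m1 : (W * P) * (u x * S) ≤ (2 * v x) * (u x * S) :=
        mul_le_mul_of_nonneg_right hv2 (mul_nonneg (hu x).le hS.le)
      have m2 : (N * S) * (v x * P) ≤ (2 * u x) * (v x * P) :=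
        mul_le_mul_of_nonneg_right hu2 (mul_nonneg (hv x).le hP.le)
      nlinarith [e]
    have goal1 : P * S / (P + S) ≤ 2 * (u x * v x) := by
      rw [div_le_iff₀ hsum]; nlinarith [k1]
    rw [hhF]; linarith [goal1]
  · -- upper bound
    have k2 : (P + S) * (u x * v x) ≤ 2 * (P * S) := by
      have m1 : v x * (u x * S) ≤ (2 * P * W) * (u x * S) :=
        mul_le_mul_of_nonneg_right hv1 (mul_nonneg (hu x).le hS.le)
      have m2 : u x * (v x * P) ≤ (2 * S * N) * (v x * P) :=
        mul_le_mul_of_nonneg_right hu1 (mul_nonneg (hv x).le hP.le)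
      nlinarith [e]
    have goal2 : u x * v x ≤ 2 * (P * S) / (P + S) := by
      rw [le_div_iff₀ hsum]; nlinarith [k2]
    rw [hhF, show (2:ℝ) * (P * S / (P + S)) = 2 * (P * S) / (P + S) by ring]
    exact goal2


end
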